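/- Let r ≤ k and let G be a K_{k+1}-free graph on n vertices. Then the number of r-cliques of G is at most the number of r-cliques of the k-partite Turán graph T_k(n). -/

import Mathlib

open Finset SimpleGraph

namespace Stmt11Aux

variable {V : Type} [Fintype V] [DecidableEq V]

lemma card_cliqueFinset_zero (G : SimpleGraph V) [DecidableRel G.Adj] :
    (G.cliqueFinset 0).card = 1 := by
  have h : G.cliqueFinset 0 = {∅} := by
    ext s; simp [SimpleGraph.mem_cliqueFinset_iff, SimpleGraph.isNClique_zero]
  rw [h]; rfl

lemma turan_top_count {n k r : ℕ} (h : n ≤ k) :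
    ((turanGraph n k).cliqueFinset r).card = n.choose r := by
  have htop : turanGraph n k = ⊤ := turanGraph_eq_top.2 (Or.inr h)
  have h2 : (turanGraph n k).cliqueFinset r = Finset.univ.powersetCard r := by
    ext s
    simp only [SimpleGraph.mem_cliqueFinset_iff, SimpleGraph.isNClique_iff,
      Finset.mem_powersetCard_univ, htop]
    refine and_iff_right ?_
    intro x _ y _ hxy
    exact hxy
  rw [h2, Finset.card_powersetCard, Finset.card_univ, Fintype.card_fin]

lemma turan_mono {k r d m : ℕ} (h : d ≤ m) :
    ((turanGraph d k).cliqueFinset r).card ≤ ((turanGraph m k).cliqueFinset r).card := by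
  apply Finset.card_le_card_of_injOn
    (fun S => S.map (Fin.castLEEmb h))
  · intro S hS
    rw [Finset.mem_coe, SimpleGraph.mem_cliqueFinset_iff] at hS ⊢
    obtain ⟨hc, hcard⟩ := hS
    constructor
    · intro x hx y hy hxy
      simp only [Finset.coe_map, Set.mem_image, Finset.mem_coe] at hx hy
      obtain ⟨a, ha, rfl⟩ := hx
      obtain ⟨b, hb, rfl⟩ := hy
      have hab : a ≠ b := by rintro rfl; exact hxy rfl
      have := hc ha hb hab
      simpa [turanGraph, Fin.coe_castLE] using this
    · rwa [Finset.card_map]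
  · intro S _ T _ hST
    exact Finset.map_injective _ hST


instance induce_decidableRel (G : SimpleGraph V) [DecidableRel G.Adj] (s : Set V) :
    DecidableRel (G.induce s).Adj := fun a b => inferInstanceAs (Decidable (G.Adj a b))

lemma nbhd_cliqueFree (G : SimpleGraph V) [DecidableRel G.Adj] (v : V) {k : ℕ}
    (hfree : G.CliqueFree (k + 1)) :
    (G.induce (G.neighborSet v)).CliqueFree k := by
  intro s hs
  refine hfree (insert v (s.map (Function.Embedding.subtype _))) ?_
  have hclique : G.IsNClique k (s.map (Function.Embedding.subtype _)) := by
    constructor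
    · intro x hx y hy hxy
      simp only [Finset.coe_map, Set.mem_image, Finset.mem_coe] at hx hy
      obtain ⟨a, ha, rfl⟩ := hx
      obtain ⟨b, hb, rfl⟩ := hy
      have hab : a ≠ b := fun h => hxy (by rw [h])
      exact hs.1 ha hb hab
    · rw [Finset.card_map]; exact hs.2
  refine hclique.insert ?_
  intro b hb
  simp only [Finset.mem_map, Function.Embedding.coe_subtype] at hb
  obtain ⟨⟨a, ha⟩, _, rfl⟩ := hb
  exact ha

lemma decomp (G : SimpleGraph V) [DecidableRel G.Adj] (v : V) {r : ℕ} (hr : 1 ≤ r) :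
    (G.cliqueFinset r).card ≤
      ((G.induce ({v}ᶜ : Set V)).cliqueFinset r).card +
      ((G.induce (G.neighborSet v)).cliqueFinset (r - 1)).card := by
  rw [← Finset.card_filter_add_card_filter_not (s := G.cliqueFinset r)
    (p := fun s => v ∈ s), add_comm]
  apply Nat.add_le_add
  -- cliques avoiding v
  · apply Finset.card_le_card_of_injOn (fun s => s.subtype (· ∈ ({v}ᶜ : Set V)))
    · intro s hs
      simp only [Finset.mem_coe, Finset.mem_filter, SimpleGraph.mem_cliqueFinset_iff] at hs
      obtain ⟨⟨hc, hcard⟩, hv⟩ := hs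
      rw [Finset.mem_coe, SimpleGraph.mem_cliqueFinset_iff]
      constructor
      · rintro ⟨a, ha⟩ hxa ⟨b, hb⟩ hxb hab
        simp only [Finset.mem_coe, Finset.mem_subtype] at hxa hxb
        have : a ≠ b := fun h => hab (by simp [h])
        exact hc hxa hxb this
      · rw [Finset.card_subtype, Finset.filter_true_of_mem, hcard]
        intro x hx
        simp only [Set.mem_compl_iff, Set.mem_singleton_iff]
        rintro rfl; exact hv hx
    · intro s hs t ht hst
      simp only [Finset.coe_filter, Set.mem_setOf_eq, Finset.mem_coe, SimpleGraph.mem_cliqueFinset_iff] at hs ht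
      have hs' : ∀ x ∈ s, x ∈ ({v}ᶜ : Set V) := by
        intro x hx
        simp only [Set.mem_compl_iff, Set.mem_singleton_iff]
        rintro rfl; exact hs.2 hx
      have ht' : ∀ x ∈ t, x ∈ ({v}ᶜ : Set V) := by
        intro x hx
        simp only [Set.mem_compl_iff, Set.mem_singleton_iff]
        rintro rfl; exact ht.2 hx
      have := congrArg (Finset.map (Function.Embedding.subtype _)) hst
      rwa [Finset.subtype_map_of_mem hs', Finset.subtype_map_of_mem ht'] at this
  -- cliques containing v
  · apply Finset.card_le_card_of_injOn
      (fun s => (s.erase v).subtype (· ∈ G.neighborSet v))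
    · intro s hs
      simp only [Finset.mem_coe, Finset.mem_filter, SimpleGraph.mem_cliqueFinset_iff] at hs
      obtain ⟨⟨hc, hcard⟩, hv⟩ := hs
      have hnb : ∀ x ∈ s.erase v, x ∈ G.neighborSet v := by
        intro x hx
        exact hc hv (Finset.mem_of_mem_erase hx) (Ne.symm (Finset.ne_of_mem_erase hx))
      rw [Finset.mem_coe, SimpleGraph.mem_cliqueFinset_iff]
      constructor
      · rintro ⟨a, ha⟩ hxa ⟨b, hb⟩ hxb hab
        simp only [Finset.mem_coe, Finset.mem_subtype] at hxa hxb
        have : a ≠ b := fun h => hab (by simp [h])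
        exact hc (Finset.mem_of_mem_erase hxa) (Finset.mem_of_mem_erase hxb) this
      · rw [Finset.card_subtype, Finset.filter_true_of_mem hnb,
          Finset.card_erase_of_mem hv, hcard]
    · intro s hs t ht hst
      simp only [Finset.coe_filter, Set.mem_setOf_eq, Finset.mem_coe, SimpleGraph.mem_cliqueFinset_iff] at hs ht
      have hs' : ∀ x ∈ s.erase v, x ∈ G.neighborSet v := fun x hx =>
        hs.1.1 hs.2 (Finset.mem_of_mem_erase hx) (Ne.symm (Finset.ne_of_mem_erase hx))
      have ht' : ∀ x ∈ t.erase v, x ∈ G.neighborSet v := fun x hx =>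
        ht.1.1 ht.2 (Finset.mem_of_mem_erase hx) (Ne.symm (Finset.ne_of_mem_erase hx))
      have h2 := congrArg (Finset.map (Function.Embedding.subtype _)) hst
      rw [Finset.subtype_map_of_mem hs', Finset.subtype_map_of_mem ht'] at h2
      have := congrArg (insert v) h2
      rwa [Finset.insert_erase hs.2, Finset.insert_erase ht.2] at this


lemma exists_small_degree {n k : ℕ} (hk : 1 ≤ k) (hn0 : 0 < n)
    (hn : Fintype.card V = n) (G : SimpleGraph V) [DecidableRel G.Adj]
    (hfree : G.CliqueFree (k + 1)) :
    ∃ v : V, G.degree v ≤ n - 1 - (n - 1) / k := by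
  by_contra hcon
  push_neg at hcon
  set b := (n - 1) / k with hb
  have claim : ∀ j : ℕ, j ≤ k + 1 → ∃ s : Finset V, G.IsClique s ∧ s.card = j ∧
      n ≤ (Finset.univ.filter (fun w => ∀ u ∈ s, G.Adj u w)).card + j * b := by
    intro j
    induction j with
    | zero =>
      intro _
      refine ⟨∅, by intro x hx; simp at hx, rfl, ?_⟩
      have h0 : (Finset.univ.filter (fun w => ∀ u ∈ (∅ : Finset V), G.Adj u w)) =
          Finset.univ := by
        apply Finset.filter_true_of_mem
        intro x _ u hu
        exact absurd hu (Finset.notMem_empty u)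
      rw [h0, Finset.card_univ, hn]
      omega
    | succ j ihj =>
      intro hj1
      obtain ⟨s, hsc, hscard, hsn⟩ := ihj (by omega)
      have hkb : k * b ≤ n - 1 := by
        rw [hb, mul_comm]
        exact Nat.div_mul_le_self (n - 1) k
      have hjb : j * b ≤ k * b := Nat.mul_le_mul_right _ (by omega)
      have hpos : 0 < (Finset.univ.filter (fun w => ∀ u ∈ s, G.Adj u w)).card := by omega
      obtain ⟨w, hw⟩ := Finset.card_pos.mp hpos
      rw [Finset.mem_filter] at hw
      have hadj : ∀ u ∈ s, G.Adj u w := hw.2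
      have hws : w ∉ s := fun h => G.irrefl (hadj w h)
      refine ⟨insert w s, ?_, ?_, ?_⟩
      · intro x hx y hy hxy
        simp only [Finset.coe_insert, Set.mem_insert_iff, Finset.mem_coe] at hx hy
        rcases hx with rfl | hx
        · rcases hy with rfl | hy
          · exact absurd rfl hxy
          · exact (hadj y hy).symm
        · rcases hy with rfl | hy
          · exact hadj x hx
          · exact hsc hx hy hxy
      · rw [Finset.card_insert_of_notMem hws, hscard]
      · have hsub : Finset.univ.filter (fun u => ∀ x ∈ s, G.Adj x u) ⊆
            (Finset.univ.filter (fun u => ∀ x ∈ insert w s, G.Adj x u)) ∪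
            (Finset.univ.filter (fun u => ¬ G.Adj w u)) := by
          intro u hu
          rw [Finset.mem_filter] at hu
          by_cases h : G.Adj w u
          · apply Finset.mem_union_left
            rw [Finset.mem_filter]
            refine ⟨Finset.mem_univ _, ?_⟩
            intro x hx
            rcases Finset.mem_insert.mp hx with rfl | hx
            · exact h
            · exact hu.2 x hx
          · apply Finset.mem_union_right
            rw [Finset.mem_filter]
            exact ⟨Finset.mem_univ _, h⟩
        have hcompl : Finset.univ.filter (fun u => ¬ G.Adj w u) = (G.neighborFinset w)ᶜ := by
          ext u
          simp [SimpleGraph.mem_neighborFinset]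
        have hdegw : n - 1 - b < G.degree w := hcon w
        have hdeg_le : G.degree w ≤ n := by
          rw [← hn, ← Finset.card_univ, ← SimpleGraph.card_neighborFinset_eq_degree]
          exact Finset.card_le_univ _
        have hcard2 : (Finset.univ.filter (fun u => ¬ G.Adj w u)).card = n - G.degree w := by
          rw [hcompl, Finset.card_compl, SimpleGraph.card_neighborFinset_eq_degree, hn]
        have hle := (Finset.card_le_card hsub).trans (Finset.card_union_le _ _)
        rw [hcard2] at hle
        have hnb : n - G.degree w ≤ b := by omega
        have : (j+1) * b = j * b + b := by rw [Nat.succ_mul]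
        omega
  obtain ⟨s, hsc, hscard, _⟩ := claim (k+1) le_rfl
  exact hfree s ⟨hsc, hscard⟩

/-- residue relabeling avoiding class `c` -/
def gg (c i : ℕ) : ℕ := if i < c then i else i + 1

lemma arith_bound {k n x : ℕ} (hk : 2 ≤ k) (hkn : k < n) (hx : x < n - 1 - (n - 1) / k) :
    gg ((n-1) % k) (x % (k-1)) + x / (k-1) * k < n := by
  set q := (n-1)/k with hq
  set c := (n-1)%k with hc
  set i := x % (k-1) with hi
  set e := x / (k-1) with he
  have h1 : k * q + c = n - 1 := Nat.div_add_mod (n-1) k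
  have h2 : (k-1) * e + i = x := Nat.div_add_mod x (k-1)
  have hik : i < k - 1 := Nat.mod_lt _ (by omega)
  have hck : c < k := Nat.mod_lt _ (by omega)
  have hq1 : k * q = (k-1) * q + q := by
    have : (k-1) + 1 = k := by omega
    calc k * q = ((k-1) + 1) * q := by rw [this]
    _ = (k-1) * q + q := by rw [Nat.succ_mul]
  have hxq : x < (k-1) * q + c := by omega
  unfold gg
  rcases Nat.lt_or_ge e (q+1) with he1 | he1
  · have hek : e * k ≤ q * k := Nat.mul_le_mul_right _ (by omega)
    rw [mul_comm e k, mul_comm q k] at hek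
    by_cases hic : i < c
    · rw [if_pos hic]
      rw [mul_comm]
      omega
    · rw [if_neg hic]
      have heq : e < q := by
        rcases Nat.lt_or_ge e q with h | h
        · exact h
        · exfalso
          have hEq : e = q := by omega
          rw [hEq] at h2
          omega
      have hek' : k * e + k ≤ k * q := by
        have h4 : (e+1) * k ≤ q * k := Nat.mul_le_mul_right _ (by omega)
        rw [Nat.succ_mul] at h4
        rw [mul_comm e k, mul_comm q k] at h4
        omega
      rw [mul_comm]
      omega
  · exfalso
    have h3 : (k-1) * (q+1) ≤ (k-1) * e := Nat.mul_le_mul_left _ he1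
    have h5 : (k-1) * (q+1) = (k-1)*q + (k-1) := Nat.mul_succ _ _
    omega


lemma gg_lt {c i k : ℕ} (hik : i < k - 1) (hck : c < k) : gg c i < k := by
  unfold gg; split_ifs <;> omega

lemma gg_inj {c i j : ℕ} (h : gg c i = gg c j) : i = j := by
  unfold gg at h; split_ifs at h <;> omega

lemma gg_ne {c i : ℕ} : gg c i ≠ c := by
  unfold gg; split_ifs <;> omega

lemma turan_rec {n k r : ℕ} (hk : 1 ≤ k) (hkn : k < n) (hr : 1 ≤ r) :
    ((turanGraph (n-1) k).cliqueFinset r).card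
      + ((turanGraph (n-1-(n-1)/k) (k-1)).cliqueFinset (r-1)).card
      ≤ ((turanGraph n k).cliqueFinset r).card := by
  set D := n - 1 - (n-1)/k with hD
  set c := (n-1) % k with hc
  have hn1 : 1 ≤ n := by omega
  set last : Fin n := ⟨n-1, by omega⟩ with hlast
  have hk2 : ∀ _x : Fin D, 2 ≤ k := by
    intro x
    by_contra h
    have hk1 : k = 1 := by omega
    have h2 : (x : ℕ) < n - 1 - (n - 1) / k := x.2
    rw [hk1, Nat.div_one] at h2
    omega
  have hbound : ∀ x : Fin D, gg c (x.1 % (k-1)) + x.1 / (k-1) * k < n := by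
    intro x
    exact hc ▸ arith_bound (hk2 x) hkn (hD ▸ x.2)
  set f : Fin D → Fin n := fun x => ⟨gg c (x.1 % (k-1)) + x.1 / (k-1) * k, hbound x⟩ with hf
  have hik : ∀ x : Fin D, x.1 % (k-1) < k - 1 := fun x => Nat.mod_lt _ (by have := hk2 x; omega)
  have hck : c < k := Nat.mod_lt _ (by omega)
  have hfmod : ∀ x : Fin D, (f x).1 % k = gg c (x.1 % (k-1)) := by
    intro x
    show (gg c (x.1 % (k-1)) + x.1 / (k-1) * k) % k = _
    rw [Nat.add_mul_mod_self_right, Nat.mod_eq_of_lt (gg_lt (hik x) hck)]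
  have hfdiv : ∀ x : Fin D, (f x).1 / k = x.1 / (k-1) := by
    intro x
    show (gg c (x.1 % (k-1)) + x.1 / (k-1) * k) / k = _
    rw [Nat.add_mul_div_right _ _ (show 0 < k by omega),
      Nat.div_eq_of_lt (gg_lt (hik x) hck), Nat.zero_add]
  have hfinj : Function.Injective f := by
    intro x y hxy
    have h1 : (f x).1 % k = (f y).1 % k := by rw [hxy]
    have h2 : (f x).1 / k = (f y).1 / k := by rw [hxy]
    rw [hfmod x, hfmod y] at h1
    rw [hfdiv x, hfdiv y] at h2
    have hmm : x.1 % (k-1) = y.1 % (k-1) := gg_inj h1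
    have ex := Nat.div_add_mod x.1 (k-1)
    have ey := Nat.div_add_mod y.1 (k-1)
    rw [h2, hmm] at ex
    exact Fin.ext (by omega)
  have hfne : ∀ x : Fin D, (f x).1 % k ≠ c := fun x => by rw [hfmod x]; exact gg_ne
  have hlastmod : (last : Fin n).1 % k = c := by rw [hc]
  have hlnotin : ∀ S : Finset (Fin D), last ∉ S.map ⟨f, hfinj⟩ := by
    intro S hmem
    rw [Finset.mem_map] at hmem
    obtain ⟨x, _, hx⟩ := hmem
    have hxx : f x = last := hx
    exact hfne x (by rw [hxx])
  set A := ((turanGraph (n-1) k).cliqueFinset r).image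
      (fun S => S.map (Fin.castLEEmb (show n-1 ≤ n by omega))) with hA
  set B := ((turanGraph D (k-1)).cliqueFinset (r-1)).image
      (fun S => insert last (S.map ⟨f, hfinj⟩)) with hB
  have hAcard : A.card = ((turanGraph (n-1) k).cliqueFinset r).card := by
    apply Finset.card_image_of_injOn
    intro S _ T _ h
    exact Finset.map_injective _ h
  have hBcard : B.card = ((turanGraph D (k-1)).cliqueFinset (r-1)).card := by
    apply Finset.card_image_of_injOn
    intro S _ T _ h
    have h2 := congrArg (fun t => Finset.erase t last) h
    simp only [Finset.erase_insert (hlnotin S), Finset.erase_insert (hlnotin T)] at h2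
    exact Finset.map_injective _ h2
  have hAsub : ∀ T ∈ A, T ∈ (turanGraph n k).cliqueFinset r ∧ last ∉ T := by
    intro T hT
    rw [hA, Finset.mem_image] at hT
    obtain ⟨S, hS, rfl⟩ := hT
    rw [SimpleGraph.mem_cliqueFinset_iff] at hS
    constructor
    · rw [SimpleGraph.mem_cliqueFinset_iff]
      refine ⟨?_, by rw [Finset.card_map]; exact hS.2⟩
      intro x hx y hy hxy
      simp only [Finset.coe_map, Set.mem_image, Finset.mem_coe] at hx hy
      obtain ⟨a, ha, rfl⟩ := hx
      obtain ⟨b, hb, rfl⟩ := hy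
      have hab : a ≠ b := fun h => hxy (by rw [h])
      exact hS.1 ha hb hab
    · intro hmem
      rw [Finset.mem_map] at hmem
      obtain ⟨a, _, ha⟩ := hmem
      have hval : (a : ℕ) = n - 1 := congrArg Fin.val ha
      have h2 := a.2
      omega
  have hBsub : ∀ T ∈ B, T ∈ (turanGraph n k).cliqueFinset r ∧ last ∈ T := by
    intro T hT
    rw [hB, Finset.mem_image] at hT
    obtain ⟨S, hS, rfl⟩ := hT
    rw [SimpleGraph.mem_cliqueFinset_iff] at hS
    refine ⟨?_, Finset.mem_insert_self _ _⟩
    rw [SimpleGraph.mem_cliqueFinset_iff]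
    have hmap : (turanGraph n k).IsNClique (r-1) (S.map ⟨f, hfinj⟩) := by
      refine ⟨?_, by rw [Finset.card_map]; exact hS.2⟩
      intro x hx y hy hxy
      simp only [Finset.coe_map, Set.mem_image, Finset.mem_coe] at hx hy
      obtain ⟨a, ha, rfl⟩ := hx
      obtain ⟨b, hb, rfl⟩ := hy
      have hab : a ≠ b := fun h => hxy (by rw [h])
      have hadj := hS.1 ha hb hab
      show ((⟨f, hfinj⟩ : Fin D ↪ Fin n) a).1 % k ≠ ((⟨f, hfinj⟩ : Fin D ↪ Fin n) b).1 % k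
      show (f a).1 % k ≠ (f b).1 % k
      rw [hfmod a, hfmod b]
      intro hgg
      exact hadj (gg_inj hgg)
    have hins : (turanGraph n k).IsNClique ((r-1)+1) (insert last (S.map ⟨f, hfinj⟩)) := by
      refine hmap.insert ?_
      intro b hb
      rw [Finset.mem_map] at hb
      obtain ⟨x, _, rfl⟩ := hb
      show (last : Fin n).1 % k ≠ (f x).1 % k
      rw [hlastmod]
      exact fun h => hfne x h.symm
    have hr1 : r - 1 + 1 = r := by omega
    rwa [hr1] at hins
  have hdisj : Disjoint A B := by
    rw [Finset.disjoint_left]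
    intro T hTA hTB
    exact (hAsub T hTA).2 (hBsub T hTB).2
  have hsub : A ∪ B ⊆ (turanGraph n k).cliqueFinset r := by
    intro T hT
    rcases Finset.mem_union.mp hT with h | h
    · exact (hAsub T h).1
    · exact (hBsub T h).1
  calc ((turanGraph (n-1) k).cliqueFinset r).card
        + ((turanGraph D (k-1)).cliqueFinset (r-1)).card
      = A.card + B.card := by rw [hAcard, hBcard]
    _ = (A ∪ B).card := (Finset.card_union_of_disjoint hdisj).symm
    _ ≤ ((turanGraph n k).cliqueFinset r).card := Finset.card_le_card hsub

theorem aux (n : ℕ) : ∀ (k r : ℕ) (V : Type) [Fintype V] [DecidableEq V]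
    (G : SimpleGraph V) [DecidableRel G.Adj], Fintype.card V = n → G.CliqueFree (k + 1) →
    (G.cliqueFinset r).card ≤ ((turanGraph n k).cliqueFinset r).card := by
  induction n using Nat.strong_induction_on with
  | _ n ih =>
    intro k r V _ _ G _ hn hfree
    by_cases hnk : n ≤ k
    · calc (G.cliqueFinset r).card ≤ (Fintype.card V).choose r := G.card_cliqueFinset_le
        _ = n.choose r := by rw [hn]
        _ = ((turanGraph n k).cliqueFinset r).card := (turan_top_count hnk).symm
    · push_neg at hnk
      have hn0 : 0 < n := by omega
      rcases Nat.eq_zero_or_pos k with rfl | hk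
      · exfalso
        have hne : Nonempty V := by rw [← Fintype.card_pos_iff, hn]; exact hn0
        obtain ⟨v⟩ := hne
        exact hfree {v} (by rw [SimpleGraph.isNClique_one]; exact ⟨v, rfl⟩)
      rcases Nat.eq_zero_or_pos r with rfl | hr
      · rw [card_cliqueFinset_zero, card_cliqueFinset_zero]
      obtain ⟨v, hv⟩ := exists_small_degree hk hn0 hn G hfree
      have hstep := decomp G v hr
      have hcard1 : Fintype.card ({v}ᶜ : Set V) = n - 1 := by
        rw [Fintype.card_compl_set, Set.card_singleton, hn]
      have hfree1 : (G.induce ({v}ᶜ : Set V)).CliqueFree (k+1) :=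
        hfree.comap (SimpleGraph.Embedding.induce _).isContained
      have h1 := ih (n-1) (by omega) k r _ (G.induce ({v}ᶜ : Set V)) hcard1 hfree1
      have hcard2 : Fintype.card (G.neighborSet v) = G.degree v :=
        G.card_neighborSet_eq_degree v
      have hfree2 : (G.induce (G.neighborSet v)).CliqueFree ((k-1)+1) := by
        rw [Nat.sub_add_cancel hk]
        exact nbhd_cliqueFree G v hfree
      have h2 := ih (G.degree v) (Nat.lt_of_le_of_lt hv (Nat.lt_of_le_of_lt (Nat.sub_le _ _) (Nat.sub_lt hn0 Nat.one_pos))) (k-1) (r-1) _ (G.induce (G.neighborSet v))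
        hcard2 hfree2
      have h3 := h2.trans (turan_mono (k := k-1) (r := r-1) hv)
      have h4 := turan_rec hk hnk hr
      calc (G.cliqueFinset r).card
          ≤ ((G.induce ({v}ᶜ : Set V)).cliqueFinset r).card
            + ((G.induce (G.neighborSet v)).cliqueFinset (r-1)).card := hstep
        _ ≤ ((turanGraph (n-1) k).cliqueFinset r).card
            + ((turanGraph (n-1-(n-1)/k) (k-1)).cliqueFinset (r-1)).card :=
              Nat.add_le_add h1 h3
        _ ≤ ((turanGraph n k).cliqueFinset r).card := h4

end Stmt11Aux


/-- Erdős: a K_{k+1}-free graph on n vertices has at most as many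
r-cliques as the Turán graph T_k(n), for r ≤ k. -/
theorem stmt11 {V : Type} [Fintype V] [DecidableEq V] (n r k : ℕ) (hrk : r ≤ k)
    (hn : Fintype.card V = n) (G : SimpleGraph V) [DecidableRel G.Adj]
    (hfree : G.CliqueFree (k + 1)) :
    (G.cliqueFinset r).card ≤ ((SimpleGraph.turanGraph n k).cliqueFinset r).card :=
  Stmt11Aux.aux n k r V G hn hfree
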